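/- (Second-order equivalence on D2Q9.) Let f ∈ ℝ⁹ satisfy Σᵢ fᵢ = 0, and let f⁺ᵢ = (fᵢ + f_ī)/2 be its symmetric part. Define the Hermite stress moments A_{αβ} = Σᵢ H⁽²⁾ᵢ,αβ fᵢ. Then for every i, wᵢ (H⁽²⁾ᵢ,αβ A_{αβ})/(2c_s⁴) (Einstein summation over α,β ∈ {x,y}) equals f⁺ᵢ - (wᵢ φᵢ / (4c_s⁸)) Σⱼ φⱼ fⱼ, where φᵢ = (e_{ix}² - c_s²)(e_{iy}² - c_s²) is the ghost mode. -/

import Mathlib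

open Finset

/-- x-components of the D2Q9 velocities. -/
noncomputable def ex (c : ℝ) : Fin 9 → ℝ := ![0, c, 0, -c, 0, c, -c, -c, c]

/-- y-components of the D2Q9 velocities. -/
noncomputable def ey (c : ℝ) : Fin 9 → ℝ := ![0, 0, c, 0, -c, c, c, -c, -c]

/-- D2Q9 velocity components indexed by coordinate `α ∈ {x, y}`. -/
noncomputable def ev (c : ℝ) : Fin 2 → Fin 9 → ℝ := ![ex c, ey c]

/-- D2Q9 weights. -/
noncomputable def w9 : Fin 9 → ℝ := ![4/9, 1/9, 1/9, 1/9, 1/9, 1/36, 1/36, 1/36, 1/36]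

/-- Velocity inversion on D2Q9 indices: `e (bar9 i) = - e i`. -/
def bar9 : Fin 9 → Fin 9 := ![0, 3, 4, 1, 2, 7, 8, 5, 6]

/-- Squared sound speed. -/
noncomputable def cs2 (c : ℝ) : ℝ := c ^ 2 / 3

/-- Second-order Hermite polynomials `H⁽²⁾ᵢ,αβ = e_{iα} e_{iβ} - c_s² δ_{αβ}`. -/
noncomputable def H2 (c : ℝ) (α β : Fin 2) (i : Fin 9) : ℝ :=
  ev c α i * ev c β i - cs2 c * (if α = β then 1 else 0)

/-- Third-order Hermite polynomials. -/
noncomputable def H3 (c : ℝ) (α β γ : Fin 2) (i : Fin 9) : ℝ :=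
  ev c α i * ev c β i * ev c γ i -
    cs2 c * (ev c α i * (if β = γ then 1 else 0) + ev c β i * (if γ = α then 1 else 0) +
      ev c γ i * (if α = β then 1 else 0))

/-- The D2Q9 ghost mode `φᵢ = (e_{ix}² - c_s²)(e_{iy}² - c_s²)`. -/
noncomputable def ghost (c : ℝ) (i : Fin 9) : ℝ :=
  (ex c i ^ 2 - cs2 c) * (ey c i ^ 2 - cs2 c)

/-- The symmetric subspace of `ℝ⁹` under velocity inversion. -/
def S9 : Submodule ℝ (Fin 9 → ℝ) where
  carrier := {f | ∀ i, f (bar9 i) = f i}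
  add_mem' := by intro a b ha hb i; simp [ha i, hb i]
  zero_mem' := by intro i; simp
  smul_mem' := by intro r a ha i; simp [ha i]

/-- The antisymmetric subspace of `ℝ⁹` under velocity inversion. -/
def A9 : Submodule ℝ (Fin 9 → ℝ) where
  carrier := {f | ∀ i, f (bar9 i) = -f i}
  add_mem' := by intro a b ha hb i; simp [ha i, hb i]; ring
  zero_mem' := by intro i; simp
  smul_mem' := by intro r a ha i; simp [ha i]

lemma sum_univ_nine' (f : Fin 9 → ℝ) :
    ∑ i, f i = f 0 + f 1 + f 2 + f 3 + f 4 + f 5 + f 6 + f 7 + f 8 := by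
  rw [Fin.sum_univ_castSucc, Fin.sum_univ_eight]; rfl

@[simp] lemma ex_0 (c : ℝ) : ex c 0 = 0 := rfl
@[simp] lemma ey_0 (c : ℝ) : ey c 0 = 0 := rfl
@[simp] lemma w9_0 : w9 0 = 4/9 := rfl
@[simp] lemma bar9_0 : bar9 0 = 0 := rfl
@[simp] lemma ex_1 (c : ℝ) : ex c 1 = c := rfl
@[simp] lemma ey_1 (c : ℝ) : ey c 1 = 0 := rfl
@[simp] lemma w9_1 : w9 1 = 1/9 := rfl
@[simp] lemma bar9_1 : bar9 1 = 3 := rfl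
@[simp] lemma ex_2 (c : ℝ) : ex c 2 = 0 := rfl
@[simp] lemma ey_2 (c : ℝ) : ey c 2 = c := rfl
@[simp] lemma w9_2 : w9 2 = 1/9 := rfl
@[simp] lemma bar9_2 : bar9 2 = 4 := rfl
@[simp] lemma ex_3 (c : ℝ) : ex c 3 = -c := rfl
@[simp] lemma ey_3 (c : ℝ) : ey c 3 = 0 := rfl
@[simp] lemma w9_3 : w9 3 = 1/9 := rfl
@[simp] lemma bar9_3 : bar9 3 = 1 := rfl
@[simp] lemma ex_4 (c : ℝ) : ex c 4 = 0 := rfl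
@[simp] lemma ey_4 (c : ℝ) : ey c 4 = -c := rfl
@[simp] lemma w9_4 : w9 4 = 1/9 := rfl
@[simp] lemma bar9_4 : bar9 4 = 2 := rfl
@[simp] lemma ex_5 (c : ℝ) : ex c 5 = c := rfl
@[simp] lemma ey_5 (c : ℝ) : ey c 5 = c := rfl
@[simp] lemma w9_5 : w9 5 = 1/36 := rfl
@[simp] lemma bar9_5 : bar9 5 = 7 := rfl
@[simp] lemma ex_6 (c : ℝ) : ex c 6 = -c := rfl
@[simp] lemma ey_6 (c : ℝ) : ey c 6 = c := rfl
@[simp] lemma w9_6 : w9 6 = 1/36 := rfl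
@[simp] lemma bar9_6 : bar9 6 = 8 := rfl
@[simp] lemma ex_7 (c : ℝ) : ex c 7 = -c := rfl
@[simp] lemma ey_7 (c : ℝ) : ey c 7 = -c := rfl
@[simp] lemma w9_7 : w9 7 = 1/36 := rfl
@[simp] lemma bar9_7 : bar9 7 = 5 := rfl
@[simp] lemma ex_8 (c : ℝ) : ex c 8 = c := rfl
@[simp] lemma ey_8 (c : ℝ) : ey c 8 = -c := rfl
@[simp] lemma w9_8 : w9 8 = 1/36 := rfl
@[simp] lemma bar9_8 : bar9 8 = 6 := rfl

set_option maxHeartbeats 4000000 in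
/-- **Second-order equivalence on D2Q9.** For `f` with `Σᵢ fᵢ = 0`, the
second-order Hermite projection equals the symmetric part of `f` minus the ghost-mode
contribution. -/
theorem d2q9_second_order_equivalence (c : ℝ) (hc : 0 < c) (f : Fin 9 → ℝ)
    (hmass : ∑ i, f i = 0) :
    ∀ i : Fin 9,
      w9 i * (∑ α : Fin 2, ∑ β : Fin 2, H2 c α β i * (∑ j, H2 c α β j * f j)) /
          (2 * (cs2 c) ^ 2)
        = (f i + f (bar9 i)) / 2 -
            w9 i * ghost c i / (4 * (cs2 c) ^ 4) * (∑ j, ghost c j * f j) := by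
  rw [sum_univ_nine'] at hmass
  have h0 : f 0 = -(f 1 + f 2 + f 3 + f 4 + f 5 + f 6 + f 7 + f 8) := by linarith
  have hc' : c ≠ 0 := hc.ne'
  have key : ∀ j : Fin 9, j = 0 ∨ j = 1 ∨ j = 2 ∨ j = 3 ∨ j = 4 ∨ j = 5 ∨ j = 6 ∨ j = 7 ∨ j = 8 := by decide
  intro i
  rcases key i with rfl | rfl | rfl | rfl | rfl | rfl | rfl | rfl | rfl <;>
  · simp only [sum_univ_nine', Fin.sum_univ_two, H2, ghost, ev, cs2,
      Matrix.cons_val_zero, Matrix.cons_val_one, Matrix.head_cons, Fin.isValue,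
      ex_0, ex_1, ex_2, ex_3, ex_4, ex_5, ex_6, ex_7, ex_8,
      ey_0, ey_1, ey_2, ey_3, ey_4, ey_5, ey_6, ey_7, ey_8,
      w9_0, w9_1, w9_2, w9_3, w9_4, w9_5, w9_6, w9_7, w9_8,
      bar9_0, bar9_1, bar9_2, bar9_3, bar9_4, bar9_5, bar9_6, bar9_7, bar9_8,
      one_ne_zero, zero_ne_one, ↓reduceIte]
    rw [h0]
    field_simp
    ring
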